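/- Let L be a Lagrangian of order r in m field components over an open set U ⊆ ℝⁿ. Then for every smooth field q : U → ℝᵐ and every smooth variation δq : U → ℝᵐ, as smooth functions on U: Σ_{k=0}^{r} (∂L/∂q^i_{,μ₁…μₖ})[q] · ∂_{μ₁}⋯∂_{μₖ} δq^i = (δL/δq^i)[q] · δq^i + ∂_μ( Σ_{k=0}^{r−1} P_i^{μμ₁…μₖ}[q] · ∂_{μ₁}⋯∂_{μₖ} δq^i ), where the Lagrangian momenta are P_i^{μ₁…μₖ} := Σ_{l=0}^{r−k} (−1)^l d_{ν₁}⋯d_{ν_l} ∂L/∂q^i_{,μ₁…μₖν₁…ν_l} for 0 ≤ k ≤ r. -/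

import Mathlib

open scoped BigOperators

noncomputable section

/-- Partial derivative of a function on `ℝⁿ` in the coordinate direction `μ`. -/
def pd {n : ℕ} (μ : Fin n) (f : (Fin n → ℝ) → ℝ) : (Fin n → ℝ) → ℝ :=
  fun x => fderiv ℝ f x (Pi.single μ 1)

/-- Iterated partial derivatives `∂_{μ₁}⋯∂_{μₖ}` along a list of coordinate directions. -/
def pds {n : ℕ} : List (Fin n) → ((Fin n → ℝ) → ℝ) → (Fin n → ℝ) → ℝ
  | [], f => f
  | μ :: l, f => pd μ (pds l f)

/-- Index of a jet variable `q^i_{,μ₁…μₖ}` (`k ≤ r`). -/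
abbrev JetIdx (n m r : ℕ) := Fin m × Σ k : Fin (r + 1), (Fin (k : ℕ) → Fin n)

abbrev JetFiber (n m r : ℕ) := JetIdx n m r → ℝ

/-- The order-`r` jet space: base coordinates together with all jet variables. -/
abbrev JetSpace (n m r : ℕ) := (Fin n → ℝ) × JetFiber n m r

/-- The `r`-jet prolongation of a field `q`. -/
def jetOf {n m : ℕ} (r : ℕ) (q : (Fin n → ℝ) → Fin m → ℝ) (x : Fin n → ℝ) :
    JetSpace n m r :=
  (x, fun p => pds (List.ofFn p.2.2) (fun y => q y p.1) x)

/-- The symmetrized delta `δ^{(μ₁}_{ν₁}⋯δ^{μₖ)}_{νₖ}` (zero if arities differ). -/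
def symCoeff {n k k' : ℕ} (μ : Fin k → Fin n) (ν : Fin k' → Fin n) : ℝ :=
  ((Finset.univ.filter fun σ : Equiv.Perm (Fin k) =>
      List.ofFn (μ ∘ σ) = List.ofFn ν).card : ℝ) / (Nat.factorial k : ℝ)

def jetDir {n : ℕ} (m r : ℕ) (i : Fin m) {k : ℕ} (μ : Fin k → Fin n) : JetFiber n m r :=
  fun p => if p.1 = i then symCoeff μ p.2.2 else 0

/-- The symmetrized partial derivative `∂L/∂q^i_{,μ₁…μₖ}` of a jet function,
obeying `∂q^i_{,ν₁…νₖ}/∂q^j_{,μ₁…μ_l} = δ^l_k δ^i_j δ^{(μ₁}_{ν₁}⋯δ^{μₖ)}_{νₖ}`. -/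
def pdQ {n m r : ℕ} (L : JetSpace n m r → ℝ) (i : Fin m) {k : ℕ} (μ : Fin k → Fin n) :
    JetSpace n m r → ℝ :=
  fun z => fderiv ℝ L z ((0 : Fin n → ℝ), jetDir m r i μ)

/-- The partial derivative `∂L/∂x^μ` of a jet function w.r.t. a base coordinate. -/
def pdX {n m r : ℕ} (L : JetSpace n m r → ℝ) (μ : Fin n) : JetSpace n m r → ℝ :=
  fun z => fderiv ℝ L z ((Pi.single μ 1 : Fin n → ℝ), 0)

def idxCast {n m a b : ℕ} (h : a ≤ b) (p : JetIdx n m a) : JetIdx n m b :=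
  ⟨p.1, ⟨⟨(p.2.1 : ℕ), Nat.lt_of_lt_of_le p.2.1.isLt (Nat.succ_le_succ h)⟩, p.2.2⟩⟩

/-- Truncation of a higher-order jet to a lower order. -/
def trunc {n m a b : ℕ} (h : a ≤ b) (z : JetSpace n m b) : JetSpace n m a :=
  (z.1, fun p => z.2 (idxCast h p))

/-- Regard an order-`a` jet function as an order-`b` jet function (`a ≤ b`). -/
def liftJ {n m a b : ℕ} (h : a ≤ b) (F : JetSpace n m a → ℝ) : JetSpace n m b → ℝ :=
  fun z => F (trunc h z)

def idxExt {n m a : ℕ} (p : JetIdx n m a) (μ : Fin n) : JetIdx n m (a + 1) :=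
  ⟨p.1, ⟨⟨(p.2.1 : ℕ) + 1, Nat.succ_lt_succ p.2.1.isLt⟩, Fin.snoc p.2.2 μ⟩⟩

/-- The total derivative `d_μ` of a jet function. -/
def dTot {n m a : ℕ} (μ : Fin n) (F : JetSpace n m a → ℝ) : JetSpace n m (a + 1) → ℝ :=
  fun z => pdX F μ (trunc (Nat.le_succ a) z)
    + ∑ p : JetIdx n m a, pdQ F p.1 p.2.2 (trunc (Nat.le_succ a) z) * z.2 (idxExt p μ)

/-- Iterated total derivatives `d_{ν₁}⋯d_{νₖ}` of a jet function. -/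
def dTots {n m : ℕ} : (a k : ℕ) → (Fin k → Fin n) → (JetSpace n m a → ℝ) →
    JetSpace n m (a + k) → ℝ
  | _, 0, _, F => F
  | a, k + 1, ν, F => dTot (ν 0) (dTots a k (fun j => ν j.succ) F)

/-- The Euler–Lagrange expressions `δL/δq^i` of an order-`r` Lagrangian,
as a jet function of order `2r`. -/
def ELjet {n m r : ℕ} (L : JetSpace n m r → ℝ) (i : Fin m) : JetSpace n m (r + r) → ℝ :=
  fun z => ∑ k : Fin (r + 1), (-1 : ℝ) ^ (k : ℕ) *
    ∑ μ : Fin (k : ℕ) → Fin n,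
      liftJ (by have := k.isLt; omega) (dTots r (k : ℕ) μ (pdQ L i μ)) z

/-- The Euler–Lagrange expressions `δL/δq^i` evaluated along a field `q`
(using `(d_μ F)[q] = ∂_μ (F[q])`). -/
def ELfield {n m : ℕ} (r : ℕ) (L : JetSpace n m r → ℝ) (q : (Fin n → ℝ) → Fin m → ℝ)
    (i : Fin m) : (Fin n → ℝ) → ℝ :=
  fun x => ∑ k ∈ Finset.range (r + 1), (-1 : ℝ) ^ k *
    ∑ μ : Fin k → Fin n, pds (List.ofFn μ) (fun y => pdQ L i μ (jetOf r q y)) x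

/-- Scaling of the jet variables: `f[tq]` is `f ∘ scaleJet t`. -/
def scaleJet {n m r : ℕ} (t : ℝ) (z : JetSpace n m r) : JetSpace n m r := (z.1, t • z.2)

/-- The Lagrangian momenta `P_i^{μ₁…μ_a}` of an order-`r` Lagrangian as jet functions. -/
def Pjet {n m r : ℕ} (L : JetSpace n m r → ℝ) (i : Fin m) {a : ℕ} (κ : Fin a → Fin n) :
    JetSpace n m (r + r) → ℝ :=
  fun z => ∑ l : Fin (r - a + 1), (-1 : ℝ) ^ (l : ℕ) *
    ∑ ν : Fin (l : ℕ) → Fin n,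
      liftJ (by have := l.isLt; omega) (dTots r (l : ℕ) ν (pdQ L i (Fin.append κ ν))) z

/-- The Lagrangian momenta `P_i^{μ₁…μ_a}` evaluated along a field `q`. -/
def PmomF {n m : ℕ} (r : ℕ) (L : JetSpace n m r → ℝ) (q : (Fin n → ℝ) → Fin m → ℝ)
    (i : Fin m) {a : ℕ} (κ : Fin a → Fin n) : (Fin n → ℝ) → ℝ :=
  fun y => ∑ l ∈ Finset.range (r - a + 1), (-1 : ℝ) ^ l *
    ∑ ν : Fin l → Fin n,
      pds (List.ofFn ν) (fun w => pdQ L i (Fin.append κ ν) (jetOf r q w)) y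

/-- The Helmholtz expressions `H_{ij}^{μ₁…μₖ}(ε)` of an order-`s` system,
as jet functions of order `2s`. -/
def Hjet {n m s : ℕ} (ε : Fin m → JetSpace n m s → ℝ) (i j : Fin m) {k : ℕ}
    (μ : Fin k → Fin n) : JetSpace n m (s + s) → ℝ :=
  fun z => liftJ (Nat.le_add_right s s) (pdQ (ε i) j μ) z
    - (-1 : ℝ) ^ k *
      ∑ l : Fin (s - k + 1), ((k + (l : ℕ)).choose k : ℝ) * (-1 : ℝ) ^ (l : ℕ) *
        ∑ ν : Fin (l : ℕ) → Fin n,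
          liftJ (by have := l.isLt; omega) (dTots s (l : ℕ) ν (pdQ (ε j) i (Fin.append μ ν))) z

/-- The Vainberg–Tonti Lagrangian `Λ(ε)[q] = ∫₀¹ ε_i[tq] q^i dt`. -/
def VTjet {n m s : ℕ} (ε : Fin m → JetSpace n m s → ℝ) : JetSpace n m s → ℝ :=
  fun z => ∫ t in (0:ℝ)..1, ∑ i : Fin m,
    ε i (scaleJet t z) * z.2 ⟨i, ⟨⟨0, Nat.succ_pos s⟩, Fin.elim0⟩⟩



section Smooth
variable {E : Type*} [NormedAddCommGroup E] [NormedSpace ℝ E] {s : Set E}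

lemma contDiffOn_fderiv_apply {f : E → ℝ} (hs : IsOpen s)
    (hf : ContDiffOn ℝ (⊤ : ℕ∞) f s) (v : E) :
    ContDiffOn ℝ (⊤ : ℕ∞) (fun x => fderiv ℝ f x v) s := by
  have h1 : ContDiffOn ℝ (⊤ : ℕ∞) (fderivWithin ℝ f s) s :=
    hf.fderivWithin hs.uniqueDiffOn (by exact_mod_cast le_top)
  have h1' : ContDiffOn ℝ (⊤ : ℕ∞) (fun x => fderiv ℝ f x) s :=
    h1.congr fun x hx => (fderivWithin_of_isOpen hs hx).symm
  exact h1'.clm_apply contDiffOn_const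

lemma diffAt_of_contDiffOn {f : E → ℝ} (hs : IsOpen s) (hf : ContDiffOn ℝ (⊤ : ℕ∞) f s)
    {x : E} (hx : x ∈ s) : DifferentiableAt ℝ f x :=
  (hf.differentiableOn (by simp)).differentiableAt (hs.mem_nhds hx)

end Smooth

section PD
variable {n : ℕ} {U : Set (Fin n → ℝ)}

lemma contDiffOn_pd (hU : IsOpen U) {f : (Fin n → ℝ) → ℝ} (hf : ContDiffOn ℝ (⊤ : ℕ∞) f U) (μ : Fin n) :
    ContDiffOn ℝ (⊤ : ℕ∞) (pd μ f) U :=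
  contDiffOn_fderiv_apply hU hf _

lemma contDiffOn_pds (hU : IsOpen U) {f : (Fin n → ℝ) → ℝ} (hf : ContDiffOn ℝ (⊤ : ℕ∞) f U)
    (l : List (Fin n)) : ContDiffOn ℝ (⊤ : ℕ∞) (pds l f) U := by
  induction l with
  | nil => exact hf
  | cons a l ih => exact contDiffOn_pd hU ih a

lemma pd_congr_nhds (hU : IsOpen U) {f g : (Fin n → ℝ) → ℝ} {x : Fin n → ℝ} (hx : x ∈ U)
    (h : ∀ y ∈ U, f y = g y) (μ : Fin n) : pd μ f x = pd μ g x := by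
  have : f =ᶠ[nhds x] g := Filter.eventuallyEq_of_mem (hU.mem_nhds hx) h
  simp only [pd, this.fderiv_eq]

lemma pd_sum {ι : Type*} (s : Finset ι) (F : ι → (Fin n → ℝ) → ℝ) {x : Fin n → ℝ}
    (h : ∀ i ∈ s, DifferentiableAt ℝ (F i) x) (μ : Fin n) :
    pd μ (fun y => ∑ i ∈ s, F i y) x = ∑ i ∈ s, pd μ (F i) x := by
  simp only [pd]
  rw [fderiv_fun_sum h]
  simp

lemma pd_const_mul {f : (Fin n → ℝ) → ℝ} {x : Fin n → ℝ} (h : DifferentiableAt ℝ f x)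
    (c : ℝ) (μ : Fin n) : pd μ (fun y => c * f y) x = c * pd μ f x := by
  simp only [pd]
  rw [fderiv_const_mul h c]
  simp

lemma pd_mul {f g : (Fin n → ℝ) → ℝ} {x : Fin n → ℝ} (hf : DifferentiableAt ℝ f x)
    (hg : DifferentiableAt ℝ g x) (μ : Fin n) :
    pd μ (fun y => f y * g y) x = pd μ f x * g x + f x * pd μ g x := by
  simp only [pd]
  rw [fderiv_fun_mul hf hg]
  simp only [ContinuousLinearMap.add_apply, ContinuousLinearMap.smul_apply, smul_eq_mul]
  ring

end PD

section Comb
variable {n : ℕ}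

lemma exists_comp_perm {k : ℕ} {μ₁ μ₂ : Fin k → Fin n}
    (h : List.Perm (List.ofFn μ₁) (List.ofFn μ₂)) :
    ∃ τ : Equiv.Perm (Fin k), μ₂ = μ₁ ∘ τ := by
  classical
  set σ₁ := Tuple.sort μ₁
  set σ₂ := Tuple.sort μ₂
  have h1 : List.ofFn (μ₁ ∘ σ₁) = List.ofFn (μ₂ ∘ σ₂) := by
    exact List.Perm.eq_of_sortedLE
      (Tuple.monotone_sort μ₁).sortedLE_ofFn (Tuple.monotone_sort μ₂).sortedLE_ofFn
      (((σ₁.ofFn_comp_perm μ₁).trans h).trans (σ₂.ofFn_comp_perm μ₂).symm)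
  have h2 : μ₁ ∘ σ₁ = μ₂ ∘ σ₂ := List.ofFn_injective h1
  refine ⟨σ₂.symm.trans σ₁, ?_⟩
  funext x
  have := congrFun h2 (σ₂.symm x)
  simpa using this.symm

lemma symCoeff_comp_perm {k k' : ℕ} (μ : Fin k → Fin n) (τ : Equiv.Perm (Fin k))
    (ν : Fin k' → Fin n) : symCoeff (μ ∘ τ) ν = symCoeff μ ν := by
  classical
  unfold symCoeff
  congr 1
  norm_cast
  apply Finset.card_nbij' (i := fun σ => τ * σ) (j := fun σ => τ⁻¹ * σ)
  · intro σ hσ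
    simp only [Finset.coe_filter, Set.mem_setOf_eq, Finset.mem_filter, Finset.mem_univ, true_and] at hσ ⊢
    rw [← hσ]; congr 1
  · intro σ hσ
    simp only [Finset.coe_filter, Set.mem_setOf_eq, Finset.mem_filter, Finset.mem_univ, true_and] at hσ ⊢
    rw [← hσ]; congr 1; funext x; simp [Equiv.Perm.mul_apply]
  · intro σ _; simp [mul_assoc]
  · intro σ _; simp [← mul_assoc]

lemma symCoeff_congr {k₁ k₂ k' : ℕ} {μ₁ : Fin k₁ → Fin n} {μ₂ : Fin k₂ → Fin n}
    (h : List.Perm (List.ofFn μ₁) (List.ofFn μ₂)) (ν : Fin k' → Fin n) :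
    symCoeff μ₁ ν = symCoeff μ₂ ν := by
  have hk : k₁ = k₂ := by simpa using h.length_eq
  subst hk
  obtain ⟨τ, rfl⟩ := exists_comp_perm h
  exact (symCoeff_comp_perm μ₁ τ ν).symm

lemma pdQ_congr {m r : ℕ} (L : JetSpace n m r → ℝ) (i : Fin m) {k₁ k₂ : ℕ}
    {μ₁ : Fin k₁ → Fin n} {μ₂ : Fin k₂ → Fin n}
    (h : List.Perm (List.ofFn μ₁) (List.ofFn μ₂)) :
    pdQ L i μ₁ = pdQ L i μ₂ := by
  have : jetDir m r i μ₁ = jetDir m r i μ₂ := by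
    funext p
    unfold jetDir
    rw [symCoeff_congr h]
  unfold pdQ
  rw [this]

end Comb

section Jet
variable {n m r : ℕ} {U : Set (Fin n → ℝ)}
  {L : JetSpace n m r → ℝ} {q δq : (Fin n → ℝ) → Fin m → ℝ}

lemma contDiffOn_jetOf (hU : IsOpen U) (hq : ContDiffOn ℝ (⊤ : ℕ∞) q U) :
    ContDiffOn ℝ (⊤ : ℕ∞) (jetOf r q) U := by
  apply ContDiffOn.prodMk contDiffOn_id
  apply contDiffOn_pi.2
  intro p
  exact contDiffOn_pds hU (contDiffOn_pi.1 hq p.1) _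

lemma smooth_G (hU : IsOpen U) (hL : ContDiffOn ℝ (⊤ : ℕ∞) L {z | z.1 ∈ U})
    (hq : ContDiffOn ℝ (⊤ : ℕ∞) q U) (i : Fin m) {k : ℕ} (μ : Fin k → Fin n) :
    ContDiffOn ℝ (⊤ : ℕ∞) (fun y => pdQ L i μ (jetOf r q y)) U := by
  have h1 : ContDiffOn ℝ (⊤ : ℕ∞) (pdQ L i μ) {z : JetSpace n m r | z.1 ∈ U} :=
    contDiffOn_fderiv_apply (hU.preimage continuous_fst) hL _
  exact h1.comp (contDiffOn_jetOf hU hq) (fun y hy => hy)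

lemma smooth_P (hU : IsOpen U) (hL : ContDiffOn ℝ (⊤ : ℕ∞) L {z | z.1 ∈ U})
    (hq : ContDiffOn ℝ (⊤ : ℕ∞) q U) (i : Fin m) {a : ℕ} (κ : Fin a → Fin n) :
    ContDiffOn ℝ (⊤ : ℕ∞) (PmomF r L q i κ) U := by
  unfold PmomF
  apply ContDiffOn.sum
  intro l _
  apply ContDiffOn.mul contDiffOn_const
  apply ContDiffOn.sum
  intro ν _
  exact contDiffOn_pds hU (smooth_G hU hL hq i _) _

lemma smooth_D (hU : IsOpen U) (hδq : ContDiffOn ℝ (⊤ : ℕ∞) δq U) (i : Fin m)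
    (l : List (Fin n)) :
    ContDiffOn ℝ (⊤ : ℕ∞) (pds l (fun y => δq y i)) U :=
  contDiffOn_pds hU (contDiffOn_pi.1 hδq i) _

end Jet

section Main
variable {n m r : ℕ} {U : Set (Fin n → ℝ)}
  {L : JetSpace n m r → ℝ} {q δq : (Fin n → ℝ) → Fin m → ℝ}

/-- `P_i^{μ₁…μ_r} = ∂L/∂q^i_{,μ₁…μ_r}` (top momentum). -/
lemma PmomF_top (i : Fin m) (μ : Fin r → Fin n) :
    PmomF r L q i μ = fun x => pdQ L i μ (jetOf r q x) := by
  funext x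
  unfold PmomF
  rw [Nat.sub_self]
  rw [Finset.sum_range_one]
  rw [Fintype.sum_unique]
  have h1 : List.ofFn (default : Fin 0 → Fin n) = [] := List.ofFn_zero
  have h2 : pdQ L i (Fin.append μ (default : Fin 0 → Fin n)) = pdQ L i μ := by
    apply pdQ_congr
    rw [List.ofFn_fin_append, h1, List.append_nil]
  rw [h1, h2]
  simp [pds]

/-- The zeroth momentum is the Euler–Lagrange expression. -/
lemma PmomF_zero (i : Fin m) (κ : Fin 0 → Fin n) :
    PmomF r L q i κ = ELfield r L q i := by
  funext x
  unfold PmomF ELfield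
  rw [Nat.sub_zero]
  apply Finset.sum_congr rfl
  intro l _
  congr 1
  apply Finset.sum_congr rfl
  intro ν _
  have h2 : pdQ L i (Fin.append κ ν) = pdQ L i ν := by
    apply pdQ_congr
    rw [List.ofFn_fin_append, List.ofFn_zero, List.nil_append]
  rw [h2]

lemma stepA (hU : IsOpen U) (hL : ContDiffOn ℝ (⊤ : ℕ∞) L {z | z.1 ∈ U})
    (hq : ContDiffOn ℝ (⊤ : ℕ∞) q U) {a : ℕ} (ha : a < r) (κ : Fin a → Fin n) (i : Fin m)
    {x : Fin n → ℝ} (hx : x ∈ U) :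
    pdQ L i κ (jetOf r q x)
      = PmomF r L q i κ x + ∑ ν₀ : Fin n, pd ν₀ (PmomF r L q i (Fin.cons ν₀ κ)) x := by
  classical
  -- expansion of each boundary momentum derivative
  have hsum : ∀ ν₀ : Fin n, pd ν₀ (PmomF r L q i (Fin.cons ν₀ κ)) x
      = ∑ l ∈ Finset.range (r - a), (-1 : ℝ) ^ l *
          ∑ ν' : Fin l → Fin n,
            pd ν₀ (pds (List.ofFn ν')
              (fun w => pdQ L i (Fin.append κ (Fin.cons ν₀ ν')) (jetOf r q w))) x := by
    intro ν₀
    have hr1 : r - (a + 1) + 1 = r - a := by omega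
    unfold PmomF
    rw [hr1]
    rw [pd_sum _ _ (fun l _ => diffAt_of_contDiffOn hU
      (ContDiffOn.mul contDiffOn_const (ContDiffOn.sum fun ν _ =>
        contDiffOn_pds hU (smooth_G hU hL hq i _) _)) hx)]
    apply Finset.sum_congr rfl
    intro l _
    rw [pd_const_mul (diffAt_of_contDiffOn hU (ContDiffOn.sum fun ν _ =>
        contDiffOn_pds hU (smooth_G hU hL hq i _) _) hx)]
    congr 1
    rw [pd_sum _ _ (fun ν _ => diffAt_of_contDiffOn hU
      (contDiffOn_pds hU (smooth_G hU hL hq i _) _) hx)]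
    apply Finset.sum_congr rfl
    intro ν' _
    have h2 : pdQ L i (Fin.append (Fin.cons ν₀ κ) ν')
        = pdQ L i (Fin.append κ (Fin.cons ν₀ ν')) := by
      apply pdQ_congr
      rw [List.ofFn_fin_append, List.ofFn_fin_append, List.ofFn_cons, List.ofFn_cons]
      exact List.perm_middle.symm
    rw [h2]
  -- expansion of the momentum itself
  have hP : PmomF r L q i κ x
      = pdQ L i κ (jetOf r q x)
        + ∑ l ∈ Finset.range (r - a), (-1 : ℝ) ^ (l + 1) *
            ∑ ν : Fin (l + 1) → Fin n,
              pds (List.ofFn ν) (fun w => pdQ L i (Fin.append κ ν) (jetOf r q w)) x := by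
    unfold PmomF
    rw [Finset.sum_range_succ']
    rw [Fintype.sum_unique]
    have h1 : List.ofFn (default : Fin 0 → Fin n) = [] := List.ofFn_zero
    have h2 : pdQ L i (Fin.append κ (default : Fin 0 → Fin n)) = pdQ L i κ := by
      apply pdQ_congr
      rw [List.ofFn_fin_append, h1, List.append_nil]
    rw [h1, h2]
    simp [pds, add_comm]
  -- the double sum via cons decomposition
  have hT : ∀ l : ℕ,
      (∑ ν : Fin (l + 1) → Fin n,
        pds (List.ofFn ν) (fun w => pdQ L i (Fin.append κ ν) (jetOf r q w)) x)
      = ∑ ν₀ : Fin n, ∑ ν' : Fin l → Fin n,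
          pd ν₀ (pds (List.ofFn ν')
            (fun w => pdQ L i (Fin.append κ (Fin.cons ν₀ ν')) (jetOf r q w))) x := by
    intro l
    rw [← (Fintype.sum_equiv (Fin.consEquiv fun _ => Fin n)
      (fun p => pds (List.ofFn (Fin.cons p.1 p.2))
        (fun w => pdQ L i (Fin.append κ (Fin.cons p.1 p.2)) (jetOf r q w)) x)
      (fun ν => pds (List.ofFn ν)
        (fun w => pdQ L i (Fin.append κ ν) (jetOf r q w)) x)
      (fun p => rfl))]
    rw [Fintype.sum_prod_type]
    apply Finset.sum_congr rfl
    intro ν₀ _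
    apply Finset.sum_congr rfl
    intro ν' _
    rw [List.ofFn_cons]
    rfl
  -- assemble
  rw [hP]
  have hswap : ∑ ν₀ : Fin n, pd ν₀ (PmomF r L q i (Fin.cons ν₀ κ)) x
      = ∑ l ∈ Finset.range (r - a), (-1 : ℝ) ^ l *
          ∑ ν : Fin (l + 1) → Fin n,
            pds (List.ofFn ν) (fun w => pdQ L i (Fin.append κ ν) (jetOf r q w)) x := by
    simp only [hsum]
    rw [Finset.sum_comm]
    apply Finset.sum_congr rfl
    intro l _
    rw [hT l, Finset.mul_sum]
  rw [hswap]
  have : ∀ l ∈ Finset.range (r - a), (-1 : ℝ) ^ (l + 1) *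
            (∑ ν : Fin (l + 1) → Fin n,
              pds (List.ofFn ν) (fun w => pdQ L i (Fin.append κ ν) (jetOf r q w)) x)
      = -((-1 : ℝ) ^ l *
            ∑ ν : Fin (l + 1) → Fin n,
              pds (List.ofFn ν) (fun w => pdQ L i (Fin.append κ ν) (jetOf r q w)) x) := by
    intro l _
    rw [pow_succ]
    ring
  rw [Finset.sum_congr rfl this, Finset.sum_neg_distrib]
  ring

end Main

set_option maxHeartbeats 2000000 in
/-- **First variation via the Lagrangian momenta** (eq. (C.6)).
For a Lagrangian `L` of order `r` in `m` field components over an open set `U ⊆ ℝⁿ`,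
for every smooth field `q` and smooth variation `δq`, as smooth functions on `U`:
`Σ_{k=0}^{r} (∂L/∂q^i_{,μ₁…μₖ})[q] ∂_{μ₁}⋯∂_{μₖ} δq^i
  = (δL/δq^i)[q] δq^i + ∂_μ( Σ_{k=0}^{r−1} P_i^{μμ₁…μₖ}[q] ∂_{μ₁}⋯∂_{μₖ} δq^i )`,
where `P_i^{μ₁…μₖ} = Σ_{l=0}^{r−k} (−1)^l d_{ν₁}⋯d_{ν_l} ∂L/∂q^i_{,μ₁…μₖν₁…ν_l}`
are the Lagrangian momenta (total derivatives evaluated along `q`). -/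
theorem first_variation_momenta
    (n m r : ℕ) (U : Set (Fin n → ℝ)) (hU : IsOpen U)
    (L : JetSpace n m r → ℝ) (hL : ContDiffOn ℝ (⊤ : ℕ∞) L {z | z.1 ∈ U})
    (q δq : (Fin n → ℝ) → Fin m → ℝ)
    (hq : ContDiffOn ℝ (⊤ : ℕ∞) q U) (hδq : ContDiffOn ℝ (⊤ : ℕ∞) δq U) :
    ∀ x ∈ U,
      ∑ k ∈ Finset.range (r + 1), ∑ μ : Fin k → Fin n, ∑ i : Fin m,
        pdQ L i μ (jetOf r q x) * pds (List.ofFn μ) (fun y => δq y i) x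
      = (∑ i : Fin m, ELfield r L q i x * δq x i)
        + ∑ μ₀ : Fin n,
            pd μ₀
              (fun y => ∑ k ∈ Finset.range r, ∑ μ : Fin k → Fin n, ∑ i : Fin m,
                PmomF r L q i (Fin.cons μ₀ μ) y *
                  pds (List.ofFn μ) (fun w => δq w i) y) x := by
  intro x hx
  classical
  -- differentiability facts
  have hdP : ∀ {b : ℕ} (κ : Fin b → Fin n) (i : Fin m),
      DifferentiableAt ℝ (PmomF r L q i κ) x :=
    fun κ i => diffAt_of_contDiffOn hU (smooth_P hU hL hq i κ) hx
  have hdD : ∀ (i : Fin m) (l : List (Fin n)),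
      DifferentiableAt ℝ (pds l (fun y => δq y i)) x :=
    fun i l => diffAt_of_contDiffOn hU (smooth_D hU hδq i l) hx
  have hdPD : ∀ {b k : ℕ} (κ : Fin b → Fin n) (μ : Fin k → Fin n) (i : Fin m),
      DifferentiableAt ℝ
        (fun y => PmomF r L q i κ y * pds (List.ofFn μ) (fun w => δq w i) y) x :=
    fun κ μ i => diffAt_of_contDiffOn hU
      ((smooth_P hU hL hq i κ).mul (smooth_D hU hδq i _)) hx
  -- generic reorder of the ν₀-sum to the outside
  have reorder : ∀ f : (k : ℕ) → (Fin k → Fin n) → Fin m → Fin n → ℝ,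
      (∑ k ∈ Finset.range r, ∑ μ : Fin k → Fin n, ∑ i : Fin m, ∑ ν₀ : Fin n, f k μ i ν₀)
      = ∑ ν₀ : Fin n, ∑ k ∈ Finset.range r, ∑ μ : Fin k → Fin n, ∑ i : Fin m, f k μ i ν₀ := by
    intro f
    calc (∑ k ∈ Finset.range r, ∑ μ : Fin k → Fin n, ∑ i : Fin m, ∑ ν₀ : Fin n, f k μ i ν₀)
        = ∑ k ∈ Finset.range r, ∑ μ : Fin k → Fin n, ∑ ν₀ : Fin n, ∑ i : Fin m, f k μ i ν₀ :=
          Finset.sum_congr rfl fun k _ => Finset.sum_congr rfl fun μ _ => Finset.sum_comm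
      _ = ∑ k ∈ Finset.range r, ∑ ν₀ : Fin n, ∑ μ : Fin k → Fin n, ∑ i : Fin m, f k μ i ν₀ :=
          Finset.sum_congr rfl fun k _ => Finset.sum_comm
      _ = ∑ ν₀ : Fin n, ∑ k ∈ Finset.range r, ∑ μ : Fin k → Fin n, ∑ i : Fin m, f k μ i ν₀ :=
          Finset.sum_comm
  -- step 1 : split off the momenta
  have e1 :
      (∑ k ∈ Finset.range (r + 1), ∑ μ : Fin k → Fin n, ∑ i : Fin m,
        pdQ L i μ (jetOf r q x) * pds (List.ofFn μ) (fun y => δq y i) x)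
      = (∑ k ∈ Finset.range (r + 1), ∑ μ : Fin k → Fin n, ∑ i : Fin m,
          PmomF r L q i μ x * pds (List.ofFn μ) (fun y => δq y i) x)
        + ∑ k ∈ Finset.range r, ∑ μ : Fin k → Fin n, ∑ i : Fin m, ∑ ν₀ : Fin n,
            pd ν₀ (PmomF r L q i (Fin.cons ν₀ μ)) x
              * pds (List.ofFn μ) (fun y => δq y i) x := by
    rw [Finset.sum_range_succ, Finset.sum_range_succ]
    have h2 : (∑ μ : Fin r → Fin n, ∑ i : Fin m,
        pdQ L i μ (jetOf r q x) * pds (List.ofFn μ) (fun y => δq y i) x)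
        = ∑ μ : Fin r → Fin n, ∑ i : Fin m,
            PmomF r L q i μ x * pds (List.ofFn μ) (fun y => δq y i) x :=
      Finset.sum_congr rfl fun μ _ => Finset.sum_congr rfl fun i _ => by
        rw [PmomF_top]
    have h3 : (∑ k ∈ Finset.range r, ∑ μ : Fin k → Fin n, ∑ i : Fin m,
        pdQ L i μ (jetOf r q x) * pds (List.ofFn μ) (fun y => δq y i) x)
        = (∑ k ∈ Finset.range r, ∑ μ : Fin k → Fin n, ∑ i : Fin m,
            PmomF r L q i μ x * pds (List.ofFn μ) (fun y => δq y i) x)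
          + ∑ k ∈ Finset.range r, ∑ μ : Fin k → Fin n, ∑ i : Fin m, ∑ ν₀ : Fin n,
              pd ν₀ (PmomF r L q i (Fin.cons ν₀ μ)) x
                * pds (List.ofFn μ) (fun y => δq y i) x := by
      rw [← Finset.sum_add_distrib]
      apply Finset.sum_congr rfl
      intro k hk
      rw [← Finset.sum_add_distrib]
      apply Finset.sum_congr rfl
      intro μ _
      rw [← Finset.sum_add_distrib]
      apply Finset.sum_congr rfl
      intro i _
      rw [stepA hU hL hq (Finset.mem_range.1 hk) μ i hx, add_mul, Finset.sum_mul]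
    rw [h2, h3]
    ring
  -- step 2 : product rule pointwise
  have e2 : ∀ (k : ℕ) (μ : Fin k → Fin n) (i : Fin m) (ν₀ : Fin n),
      pd ν₀ (PmomF r L q i (Fin.cons ν₀ μ)) x * pds (List.ofFn μ) (fun y => δq y i) x
      = pd ν₀ (fun y => PmomF r L q i (Fin.cons ν₀ μ) y
            * pds (List.ofFn μ) (fun w => δq w i) y) x
        - PmomF r L q i (Fin.cons ν₀ μ) x
            * pds (List.ofFn (Fin.cons ν₀ μ)) (fun w => δq w i) x := by
    intro k μ i ν₀
    rw [pd_mul (hdP _ i) (hdD i _)]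
    have hD' : pd ν₀ (pds (List.ofFn μ) (fun w => δq w i)) x
        = pds (List.ofFn (Fin.cons ν₀ μ)) (fun w => δq w i) x := by
      rw [List.ofFn_cons]
      rfl
    rw [hD']
    ring
  -- step 3 : the subtracted term reassembles the momenta sum minus the EL term
  have e3 : (∑ k ∈ Finset.range r, ∑ μ : Fin k → Fin n, ∑ i : Fin m, ∑ ν₀ : Fin n,
        PmomF r L q i (Fin.cons ν₀ μ) x
          * pds (List.ofFn (Fin.cons ν₀ μ)) (fun w => δq w i) x)
      = (∑ k ∈ Finset.range (r + 1), ∑ μ : Fin k → Fin n, ∑ i : Fin m,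
          PmomF r L q i μ x * pds (List.ofFn μ) (fun y => δq y i) x)
        - ∑ i : Fin m, ELfield r L q i x * δq x i := by
    have e3a : ∀ k : ℕ,
        (∑ μ : Fin k → Fin n, ∑ i : Fin m, ∑ ν₀ : Fin n,
          PmomF r L q i (Fin.cons ν₀ μ) x
            * pds (List.ofFn (Fin.cons ν₀ μ)) (fun w => δq w i) x)
        = ∑ κ : Fin (k + 1) → Fin n, ∑ i : Fin m,
            PmomF r L q i κ x * pds (List.ofFn κ) (fun w => δq w i) x := by
      intro k
      calc (∑ μ : Fin k → Fin n, ∑ i : Fin m, ∑ ν₀ : Fin n,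
          PmomF r L q i (Fin.cons ν₀ μ) x
            * pds (List.ofFn (Fin.cons ν₀ μ)) (fun w => δq w i) x)
          = ∑ μ : Fin k → Fin n, ∑ ν₀ : Fin n, ∑ i : Fin m,
              PmomF r L q i (Fin.cons ν₀ μ) x
                * pds (List.ofFn (Fin.cons ν₀ μ)) (fun w => δq w i) x :=
            Finset.sum_congr rfl fun μ _ => Finset.sum_comm
        _ = ∑ ν₀ : Fin n, ∑ μ : Fin k → Fin n, ∑ i : Fin m,
              PmomF r L q i (Fin.cons ν₀ μ) x
                * pds (List.ofFn (Fin.cons ν₀ μ)) (fun w => δq w i) x :=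
            Finset.sum_comm
        _ = ∑ p : Fin n × (Fin k → Fin n), ∑ i : Fin m,
              PmomF r L q i (Fin.cons p.1 p.2) x
                * pds (List.ofFn (Fin.cons p.1 p.2)) (fun w => δq w i) x :=
            (Fintype.sum_prod_type (f := fun p : Fin n × (Fin k → Fin n) =>
              ∑ i : Fin m, PmomF r L q i (Fin.cons p.1 p.2) x
                * pds (List.ofFn (Fin.cons p.1 p.2)) (fun w => δq w i) x)).symm
        _ = ∑ κ : Fin (k + 1) → Fin n, ∑ i : Fin m,
              PmomF r L q i κ x * pds (List.ofFn κ) (fun w => δq w i) x :=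
            Fintype.sum_equiv (Fin.consEquiv fun _ => Fin n) _ _ (fun p => rfl)
    have e3b := Finset.sum_range_succ'
      (fun k => ∑ κ : Fin k → Fin n, ∑ i : Fin m,
        PmomF r L q i κ x * pds (List.ofFn κ) (fun w => δq w i) x) r
    have e3c : (∑ κ : Fin 0 → Fin n, ∑ i : Fin m,
        PmomF r L q i κ x * pds (List.ofFn κ) (fun w => δq w i) x)
        = ∑ i : Fin m, ELfield r L q i x * δq x i := by
      rw [Fintype.sum_unique]
      apply Finset.sum_congr rfl
      intro i _
      rw [PmomF_zero, List.ofFn_zero]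
      rfl
    rw [Finset.sum_congr rfl fun k _ => e3a k]
    rw [e3b, e3c]
    ring
  -- step 4 : boundary term
  have e4 : ∀ ν₀ : Fin n,
      pd ν₀ (fun y => ∑ k ∈ Finset.range r, ∑ μ : Fin k → Fin n, ∑ i : Fin m,
          PmomF r L q i (Fin.cons ν₀ μ) y * pds (List.ofFn μ) (fun w => δq w i) y) x
      = ∑ k ∈ Finset.range r, ∑ μ : Fin k → Fin n, ∑ i : Fin m,
          pd ν₀ (fun y => PmomF r L q i (Fin.cons ν₀ μ) y
            * pds (List.ofFn μ) (fun w => δq w i) y) x := by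
    intro ν₀
    rw [pd_sum _ _ (fun k _ => diffAt_of_contDiffOn hU
      (ContDiffOn.sum fun μ _ => ContDiffOn.sum fun i _ =>
        (smooth_P hU hL hq i _).mul (smooth_D hU hδq i _)) hx)]
    apply Finset.sum_congr rfl
    intro k _
    rw [pd_sum _ _ (fun μ _ => diffAt_of_contDiffOn hU
      (ContDiffOn.sum fun i _ =>
        (smooth_P hU hL hq i _).mul (smooth_D hU hδq i _)) hx)]
    apply Finset.sum_congr rfl
    intro μ _
    exact pd_sum _ _ (fun i _ => hdPD _ _ i) ν₀
  -- assemble everything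
  rw [e1]
  rw [Finset.sum_congr rfl fun k _ => Finset.sum_congr rfl fun μ _ =>
    Finset.sum_congr rfl fun i _ => Finset.sum_congr rfl fun ν₀ _ => e2 k μ i ν₀]
  simp only [Finset.sum_sub_distrib]
  rw [e3]
  rw [reorder (fun k μ i ν₀ => pd ν₀ (fun y => PmomF r L q i (Fin.cons ν₀ μ) y
    * pds (List.ofFn μ) (fun w => δq w i) y) x)]
  rw [Finset.sum_congr rfl fun ν₀ _ => (e4 ν₀).symm]
  ring

end
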